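/- arXiv:2102.07946 — 6 statements merged into one kernel-verified Lean document; each statement's English description precedes it below -/
import Mathlib

section
/- Let p be a prime, n ≥ 1 an integer with p ∤ n, and a = i/n ∈ ℚ with 0 < a ≤ 1 (so 0 < i ≤ n). Let m ≥ 1 satisfy p^m ≡ 1 (mod n). Then the m-th iterated Dwork prime of a (viewed as an element of ℤ_p) equals a: a^{(m)} = a. -/
lemma dwork_step (p : ℕ) [Fact p.Prime]
    (dw : ℤ_[p] → ℤ_[p])
    (hdw : ∀ α : ℤ_[p], ∃ k : ℕ, k < p ∧ α + (k : ℤ_[p]) = (p : ℤ_[p]) * dw α)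
    (n : ℕ) (hn : 1 ≤ n)
    (i : ℕ) (hi0 : 0 < i) (hin : i ≤ n)
    (α : ℤ_[p]) (hα : (n : ℤ_[p]) * α = (i : ℤ_[p])) :
    ∃ j : ℕ, 0 < j ∧ j ≤ n ∧ (n : ℤ_[p]) * dw α = (j : ℤ_[p]) ∧
      p * j ≡ i [MOD n] := by
  have hp2 := (Fact.out : p.Prime).two_le
  obtain ⟨k, hk, hk2⟩ := hdw α
  have h1 : ((i + n * k : ℕ) : ℤ_[p]) = (p : ℤ_[p]) * ((n : ℤ_[p]) * dw α) := by
    push_cast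
    linear_combination (n : ℤ_[p]) * hk2 - hα
  have hpdvd : p ∣ i + n * k := by
    have hnorm : ‖((i + n * k : ℕ) : ℤ_[p])‖ < 1 := by
      rw [h1]
      calc ‖(p : ℤ_[p]) * ((n : ℤ_[p]) * dw α)‖
          ≤ ‖(p : ℤ_[p])‖ * 1 := by
            refine le_trans (norm_mul_le _ _) ?_
            gcongr
            exact PadicInt.norm_le_one _
        _ < 1 := by
            rw [mul_one, PadicInt.norm_p]
            exact inv_lt_one_of_one_lt₀ (by exact_mod_cast hp2)
    have := (PadicInt.norm_int_lt_one_iff_dvd ((i + n * k : ℕ) : ℤ)).mp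
      (by exact_mod_cast hnorm)
    exact_mod_cast this
  obtain ⟨j, hj⟩ := hpdvd
  refine ⟨j, ?_, ?_, ?_, ?_⟩
  · nlinarith
  · nlinarith
  · have hpne : (p : ℤ_[p]) ≠ 0 :=
      Nat.cast_ne_zero.mpr (Fact.out : p.Prime).ne_zero
    apply mul_left_cancel₀ hpne
    rw [← h1, hj]
    push_cast
    ring
  · show p * j % n = i % n
    rw [← hj, Nat.add_mul_mod_self_left]

/-- Let `p` be a prime, `n ≥ 1` with `p ∤ n`, and `a = i/n ∈ ℚ`
with `0 < i ≤ n`, regarded as an element of `ℤ_p`. Let `dw : ℤ_p → ℤ_p` be the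
Dwork prime operation (characterized by: for every `α` there is `k ∈ {0,…,p−1}`
with `α + k = p·(dw α)`). If `m ≥ 1` satisfies `p^m ≡ 1 (mod n)`, then the `m`-th
iterate of the Dwork prime fixes `a`: `dw^[m] a = a`. -/
theorem dwork_prime_iterate_fixes (p : ℕ) [Fact p.Prime]
    (dw : ℤ_[p] → ℤ_[p])
    (hdw : ∀ α : ℤ_[p], ∃ k : ℕ, k < p ∧ α + (k : ℤ_[p]) = (p : ℤ_[p]) * dw α)
    (n : ℕ) (hn : 1 ≤ n) (hpn : ¬ (p ∣ n))
    (i : ℕ) (hi0 : 0 < i) (hin : i ≤ n)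
    (m : ℕ) (hm : 1 ≤ m) (hpm : p ^ m ≡ 1 [MOD n])
    (a : ℤ_[p]) (ha : (n : ℤ_[p]) * a = (i : ℤ_[p])) :
    dw^[m] a = a := by
  have key : ∀ j : ℕ, ∃ c : ℕ, 0 < c ∧ c ≤ n ∧
      (n : ℤ_[p]) * dw^[j] a = (c : ℤ_[p]) ∧ p ^ j * c ≡ i [MOD n] := by
    intro j
    induction j with
    | zero => exact ⟨i, hi0, hin, by simpa using ha, by simp [Nat.ModEq.refl]⟩
    | succ j ih =>
      obtain ⟨c, hc0, hcn, hceq, hcong⟩ := ih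
      obtain ⟨c', hc'0, hc'n, hc'eq, hc'cong⟩ :=
        dwork_step p dw hdw n hn c hc0 hcn (dw^[j] a) hceq
      refine ⟨c', hc'0, hc'n, by rw [Function.iterate_succ_apply', hc'eq], ?_⟩
      calc p ^ (j + 1) * c' = p ^ j * (p * c') := by ring
        _ ≡ p ^ j * c [MOD n] := hc'cong.mul_left _
        _ ≡ i [MOD n] := hcong
  obtain ⟨c, hc0, hcn, hceq, hcong⟩ := key m
  have hci : c ≡ i [MOD n] := by
    calc c = 1 * c := (one_mul c).symm
      _ ≡ p ^ m * c [MOD n] := (hpm.mul_right c).symm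
      _ ≡ i [MOD n] := hcong
  have h0 : (i : ℤ) - c = 0 :=
    Int.eq_zero_of_abs_lt_dvd hci.dvd (abs_lt.mpr ⟨by omega, by omega⟩)
  have hci' : c = i := by omega
  have hne : (n : ℤ_[p]) ≠ 0 := Nat.cast_ne_zero.mpr (by omega)
  apply mul_left_cancel₀ hne
  rw [hceq, hci', ha]
end

section
/- For every prime p and every z ∈ ℤ_p, the limit ψ̃_p(z) := lim_{n → z} Σ_{1 ≤ k < n, p ∤ k} 1/k exists in ℤ_p, where the limit is over positive integers n converging p-adically to z. Equivalently, the function n ↦ Σ_{1 ≤ k < n, p∤k} 1/k on positive integers is uniformly continuous for the p-adic metric and hence extends continuously to ℤ_p. -/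
open Finset
open scoped Classical

variable (p : ℕ) [hp : Fact p.Prime]

/-- The `k`-th term, as a `p`-adic integer: `1/k` if `p ∤ k`, else `0`. -/
noncomputable def pterm (k : ℕ) : ℤ_[p] :=
  if h : p ∣ k then 0 else
    ⟨((k : ℚ_[p]))⁻¹, by
      have hk1 : ‖((k : ℤ) : ℚ_[p])‖ < 1 ↔ (p:ℤ) ∣ (k:ℤ) := Padic.norm_intCast_lt_one_iff
      have hle : ‖((k : ℤ) : ℚ_[p])‖ ≤ 1 := Padic.norm_int_le_one k
      have : ¬ ‖((k:ℤ) : ℚ_[p])‖ < 1 := by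
        rw [hk1]; exact_mod_cast h
      have h1 : ‖((k:ℤ) : ℚ_[p])‖ = 1 := le_antisymm hle (not_lt.mp this)
      push_cast at h1
      rw [norm_inv, h1, inv_one]⟩

lemma pterm_coe (k : ℕ) (h : ¬ p ∣ k) : ((pterm p k : ℤ_[p]) : ℚ_[p]) = ((k : ℚ_[p]))⁻¹ := by
  unfold pterm
  simp [h]

lemma pterm_mul (k : ℕ) (h : ¬ p ∣ k) : pterm p k * (k : ℤ_[p]) = 1 := by
  have hk0 : (k : ℚ_[p]) ≠ 0 := by
    have : k ≠ 0 := by rintro rfl; exact h (dvd_zero p)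
    exact_mod_cast this
  have : ((pterm p k * (k:ℤ_[p]) : ℤ_[p]) : ℚ_[p]) = ((1 : ℤ_[p]) : ℚ_[p]) := by
    push_cast [pterm_coe p k h]
    exact inv_mul_cancel₀ hk0
  have h2 := Subtype.coe_injective this
  exact h2

/-- Partial sums. -/
noncomputable def psum (n : ℕ) : ℤ_[p] := ∑ k ∈ range n, pterm p k

lemma zmod_sum_units_zero (m : ℕ) [NeZero m] (hm : 2 < m) :
    ∑ x ∈ univ.filter (fun x : ZMod m => IsUnit x), x = 0 := by
  refine Finset.sum_involution (fun x _ => -x) (fun x _ => add_neg_cancel x)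
    (fun x hx _ => ?_) (fun x hx => ?_) (fun x hx => neg_neg x)
  · intro h
    have hu : IsUnit x := by simpa using hx
    have h' : -x = x := h
    have hxx : x + x = 0 := by linear_combination -h'
    have h2 : (2 : ZMod m) * x = 0 := by linear_combination hxx
    have h2' : (2 : ZMod m) = 0 := by
      have := congrArg (· * x⁻¹) h2
      simpa [mul_assoc, ZMod.mul_inv_of_unit x hu] using this
    have : ((2 : ℕ) : ZMod m) = 0 := by exact_mod_cast h2'
    rw [ZMod.natCast_eq_zero_iff] at this
    have := Nat.le_of_dvd (by norm_num) this
    omega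
  · have hu : IsUnit x := by simpa using hx
    simpa using hu.neg

lemma zmod_sum_inv_units_zero (m : ℕ) [NeZero m] (hm : 2 < m) :
    ∑ x ∈ univ.filter (fun x : ZMod m => IsUnit x), x⁻¹ = 0 := by
  rw [← zmod_sum_units_zero m hm]
  refine Finset.sum_nbij' (fun x => x⁻¹) (fun x => x⁻¹) ?_ ?_ ?_ ?_ ?_
  · intro a ha
    have hu : IsUnit a := by simpa using ha
    simp only [mem_filter, mem_univ, true_and]
    exact IsUnit.of_mul_eq_one _ (ZMod.inv_mul_of_unit a hu)
  · intro a ha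
    have hu : IsUnit a := by simpa using ha
    simp only [mem_filter, mem_univ, true_and]
    exact IsUnit.of_mul_eq_one _ (ZMod.inv_mul_of_unit a hu)
  · intro a ha
    have hu : IsUnit a := by simpa using ha
    have hu' : IsUnit a⁻¹ := IsUnit.of_mul_eq_one _ (ZMod.inv_mul_of_unit a hu)
    have h1 : a⁻¹ * a = 1 := ZMod.inv_mul_of_unit a hu
    have h2 : a⁻¹ * a⁻¹⁻¹ = 1 := ZMod.mul_inv_of_unit a⁻¹ hu'
    exact hu'.mul_left_cancel (h2.trans h1.symm)
  · intro a ha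
    have hu : IsUnit a := by simpa using ha
    have hu' : IsUnit a⁻¹ := IsUnit.of_mul_eq_one _ (ZMod.inv_mul_of_unit a hu)
    have h1 : a⁻¹ * a = 1 := ZMod.inv_mul_of_unit a hu
    have h2 : a⁻¹ * a⁻¹⁻¹ = 1 := ZMod.mul_inv_of_unit a⁻¹ hu'
    exact hu'.mul_left_cancel (h2.trans h1.symm)
  · intro a _; rfl

lemma isUnit_zmod_iff (j k : ℕ) : IsUnit ((k : ZMod (p^(j+1)))) ↔ ¬ p ∣ k := by
  rw [ZMod.isUnit_iff_coprime]
  rw [Nat.coprime_pow_right_iff (Nat.succ_pos j)]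
  rw [Nat.coprime_comm]
  exact hp.out.coprime_iff_not_dvd

lemma zmod_block (j n : ℕ) (hm : 2 < p ^ (j+1)) :
    ∑ k ∈ Ico n (n + p^(j+1)),
      (if p ∣ k then 0 else ((k : ZMod (p^(j+1))))⁻¹) = 0 := by
  set m := p ^ (j+1) with hmdef
  haveI : NeZero m := ⟨by omega⟩
  set f : ℕ → ZMod m := fun k => if p ∣ k then 0 else ((k : ZMod m))⁻¹ with hf
  have hper : ∀ k, f (k + m) = f k := by
    intro k
    have hd : p ∣ m := dvd_pow_self p (Nat.succ_ne_zero j)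
    have hiff : p ∣ (k + m) ↔ p ∣ k := by
      constructor
      · intro h; exact (Nat.dvd_add_right hd).mp (by rwa [add_comm] at h)
      · intro h; exact Nat.dvd_add h hd
    have hcast : (((k + m) : ℕ) : ZMod m) = (k : ZMod m) := by
      push_cast [ZMod.natCast_self]; ring
    show (if p ∣ (k+m) then 0 else (((k+m : ℕ)) : ZMod m)⁻¹) = f k
    rw [hcast, if_congr hiff rfl rfl]
  have key : ∀ n, ∑ k ∈ Ico n (n + m), f k = ∑ k ∈ range m, f k := by
    intro n
    induction n with
    | zero => rw [Nat.zero_add, range_eq_Ico]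
    | succ n ih =>
      rw [← ih]
      have h1 : ∑ k ∈ Ico (n+1) (n+1+m), f k = ∑ k ∈ Ico (n+1) (n+m), f k + f (n+m) := by
        have he : n+1+m = (n+m)+1 := by ring
        rw [he, Finset.sum_Ico_succ_top (by omega)]
      have h2 : ∑ k ∈ Ico n (n+m), f k = f n + ∑ k ∈ Ico (n+1) (n+m), f k :=
        Finset.sum_eq_sum_Ico_succ_bot (by omega) f
      rw [h1, h2, hper n, add_comm]
  rw [key n]
  have step2 : ∑ k ∈ range m, f k = ∑ x : ZMod m, (if IsUnit x then x⁻¹ else 0) := by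
    refine Finset.sum_nbij' (fun k => (k : ZMod m)) (fun x => x.val) ?_ ?_ ?_ ?_ ?_
    · intro a _; exact mem_univ _
    · intro x _; exact mem_range.mpr (ZMod.val_lt x)
    · intro a ha; exact ZMod.val_cast_of_lt (mem_range.mp ha)
    · intro x _; exact ZMod.natCast_rightInverse x
    · intro a _
      simp only [hf]
      by_cases hu : p ∣ a
      · rw [if_pos hu, if_neg]
        rw [isUnit_zmod_iff]
        exact fun h => h hu
      · rw [if_neg hu, if_pos ((isUnit_zmod_iff p j a).mpr hu)]
  rw [step2, ← Finset.sum_filter]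
  exact zmod_sum_inv_units_zero m hm

lemma psum_block_norm (j n : ℕ) :
    ‖psum p (n + p^(j+1)) - psum p n‖ ≤ (p:ℝ) ^ (-(j:ℤ)) := by
  set m := p ^ (j+1) with hmdef
  have hm1 : 1 ≤ m := Nat.one_le_pow _ _ hp.out.pos
  have hdiff : psum p (n+m) - psum p n = ∑ k ∈ Ico n (n+m), pterm p k := by
    simp only [psum, range_eq_Ico]
    rw [← Finset.sum_Ico_consecutive (fun k => pterm p k) (Nat.zero_le n) (by omega : n ≤ n+m)]
    ring
  rw [hdiff]
  by_cases hm : 2 < m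
  · haveI : NeZero m := ⟨by omega⟩
    have h0 : PadicInt.toZModPow (j+1) (∑ k ∈ Ico n (n+m), pterm p k) = 0 := by
      rw [map_sum, ← zmod_block p j n hm]
      refine Finset.sum_congr rfl fun k _ => ?_
      by_cases hk : p ∣ k
      · rw [if_pos hk]
        rw [show pterm p k = 0 from dif_pos hk, map_zero]
      · rw [if_neg hk]
        have hu : IsUnit ((k : ZMod m)) := (isUnit_zmod_iff p j k).mpr hk
        have hmul : (PadicInt.toZModPow (j+1)) (pterm p k) * ((k:ℕ) : ZMod m) = 1 := by
          have h := congrArg (PadicInt.toZModPow (j+1)) (pterm_mul p k hk)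
          rwa [map_mul, map_natCast, map_one] at h
        have := congrArg (· * ((k:ℕ) : ZMod m)⁻¹) hmul
        simpa [mul_assoc, ZMod.mul_inv_of_unit _ hu] using this
    have h1 : ‖∑ k ∈ Ico n (n+m), pterm p k‖ ≤ (p:ℝ) ^ (-((j+1:ℕ):ℤ)) := by
      rw [PadicInt.norm_le_pow_iff_mem_span_pow, ← PadicInt.ker_toZModPow, RingHom.mem_ker]
      exact h0
    refine h1.trans ?_
    apply zpow_le_zpow_right₀
    · exact_mod_cast hp.out.one_lt.le
    · omega
  · have hj : j = 0 := by
      by_contra hj0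
      have h1 : 2 ≤ j + 1 := by omega
      have h2 : 2^2 ≤ 2^(j+1) := Nat.pow_le_pow_right (by norm_num) h1
      have h3 : 2^(j+1) ≤ p^(j+1) := Nat.pow_le_pow_left hp.out.two_le _
      omega
    rw [hj]
    norm_num
    exact PadicInt.norm_le_one _

lemma psum_add_mul (j t b : ℕ) :
    ‖psum p (b + t * p^(j+1)) - psum p b‖ ≤ (p:ℝ) ^ (-(j:ℤ)) := by
  induction t with
  | zero =>
    simp only [Nat.zero_mul, Nat.add_zero, sub_self, norm_zero]
    positivity
  | succ t ih =>
    have h1 := psum_block_norm p j (b + t * p^(j+1))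
    have heq : b + (t+1) * p^(j+1) = (b + t*p^(j+1)) + p^(j+1) := by ring
    rw [heq]
    have hsplit : psum p ((b + t*p^(j+1)) + p^(j+1)) - psum p b
        = (psum p ((b+t*p^(j+1)) + p^(j+1)) - psum p (b + t*p^(j+1)))
          + (psum p (b+t*p^(j+1)) - psum p b) := by ring
    rw [hsplit]
    exact le_trans (PadicInt.nonarchimedean _ _) (max_le h1 ih)

lemma psum_modeq (j : ℕ) {a b : ℕ} (h : a ≡ b [MOD p^(j+1)]) :
    ‖psum p a - psum p b‖ ≤ (p:ℝ) ^ (-(j:ℤ)) := by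
  rcases le_total b a with hba | hab
  · obtain ⟨t, ht⟩ : ∃ t, a = b + t * p^(j+1) := by
      obtain ⟨t, ht⟩ := (Nat.modEq_iff_dvd' hba).mp h.symm
      exact ⟨t, by rw [Nat.mul_comm] at ht; omega⟩
    rw [ht]; exact psum_add_mul p j t b
  · obtain ⟨t, ht⟩ : ∃ t, b = a + t * p^(j+1) := by
      obtain ⟨t, ht⟩ := (Nat.modEq_iff_dvd' hab).mp h
      exact ⟨t, by rw [Nat.mul_comm] at ht; omega⟩
    rw [norm_sub_rev, ht]; exact psum_add_mul p j t a

lemma cast_modeq {a b : ℕ} {i : ℕ}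
    (h : ((a:ℤ_[p]) - (b:ℤ_[p])) ∈ Ideal.span {(p:ℤ_[p])^i}) : a ≡ b [MOD p^i] := by
  rw [Ideal.mem_span_singleton] at h
  have h2 : (p:ℤ_[p])^i ∣ (((a:ℤ) - (b:ℤ) : ℤ) : ℤ_[p]) := by
    push_cast
    exact_mod_cast h
  rw [PadicInt.pow_p_dvd_int_iff] at h2
  rw [Nat.modEq_iff_dvd]
  rw [show (b:ℤ) - a = -((a:ℤ) - b) by ring]
  push_cast
  exact dvd_neg.mpr h2

lemma appr_sub_mem (z : ℤ_[p]) {i j : ℕ} (h : i ≤ j) :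
    z - (z.appr j : ℤ_[p]) ∈ Ideal.span {(p:ℤ_[p])^i} := by
  have h1 : z - (z.appr j : ℤ_[p]) ∈ Ideal.span {(p:ℤ_[p])^j} := PadicInt.appr_spec j z
  have h2 : Ideal.span {(p:ℤ_[p])^j} ≤ Ideal.span {(p:ℤ_[p])^i} := by
    apply Ideal.span_singleton_le_span_singleton.mpr
    exact pow_dvd_pow _ h
  exact h2 h1

lemma appr_modeq (z : ℤ_[p]) {i j k : ℕ} (hj : i ≤ j) (hk : i ≤ k) :
    z.appr j ≡ z.appr k [MOD p^i] := by
  apply cast_modeq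
  have h1 := appr_sub_mem p z hj
  have h2 := appr_sub_mem p z hk
  have : ((z.appr j : ℤ_[p]) - z.appr k)
      = (z - (z.appr k : ℤ_[p])) - (z - (z.appr j : ℤ_[p])) := by ring
  rw [this]
  exact Ideal.sub_mem _ h2 h1

lemma padic_exists_pow_lt (ε : ℝ) (hε : 0 < ε) : ∃ i : ℕ, (p:ℝ) ^ (-(i:ℤ)) < ε := by
  have hp1 : (1:ℝ) < (p:ℝ) := by exact_mod_cast hp.out.one_lt
  obtain ⟨i, hi⟩ := exists_pow_lt_of_lt_one hε (by
    rw [inv_lt_one_iff₀]; right; exact hp1 : (p:ℝ)⁻¹ < 1)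
  refine ⟨i, ?_⟩
  rw [zpow_neg, zpow_natCast, ← inv_pow]
  exact hi

lemma pow_antitone {i j : ℕ} (h : i ≤ j) : (p:ℝ) ^ (-(j:ℤ)) ≤ (p:ℝ) ^ (-(i:ℤ)) := by
  apply zpow_le_zpow_right₀
  · exact_mod_cast hp.out.one_lt.le
  · omega

lemma G_close (z : ℤ_[p]) {i j k : ℕ} (hj : i + 1 ≤ j) (hk : i + 1 ≤ k) :
    ‖psum p (z.appr j) - psum p (z.appr k)‖ ≤ (p:ℝ) ^ (-(i:ℤ)) :=
  psum_modeq p i (appr_modeq p z hj hk)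

lemma G_cauchy (z : ℤ_[p]) : CauchySeq (fun j => psum p (z.appr j)) := by
  rw [Metric.cauchySeq_iff']
  intro ε hε
  obtain ⟨i, hi⟩ := padic_exists_pow_lt p ε hε
  refine ⟨i + 1, fun n hn => ?_⟩
  rw [dist_eq_norm]
  exact lt_of_le_of_lt (G_close p z hn (le_refl _)) hi

noncomputable def psiInt (z : ℤ_[p]) : ℤ_[p] :=
  Filter.limUnder Filter.atTop (fun j => psum p (z.appr j))

lemma psiInt_tendsto (z : ℤ_[p]) :
    Filter.Tendsto (fun j => psum p (z.appr j)) Filter.atTop (nhds (psiInt p z)) :=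
  (G_cauchy p z).tendsto_limUnder

lemma psiInt_close (z : ℤ_[p]) (i : ℕ) :
    ‖psiInt p z - psum p (z.appr (i+1))‖ ≤ (p:ℝ) ^ (-(i:ℤ)) := by
  have hev : ∀ᶠ j in Filter.atTop,
      ‖psum p (z.appr j) - psum p (z.appr (i+1))‖ ≤ (p:ℝ) ^ (-(i:ℤ)) :=
    Filter.eventually_atTop.mpr ⟨i+1, fun j hj => G_close p z hj (le_refl _)⟩
  exact le_of_tendsto (((psiInt_tendsto p z).sub tendsto_const_nhds).norm) hev

lemma psiInt_ucont {z w : ℤ_[p]} {i : ℕ}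
    (h : z - w ∈ Ideal.span {(p:ℤ_[p])^(i+1)}) :
    ‖psiInt p z - psiInt p w‖ ≤ (p:ℝ) ^ (-(i:ℤ)) := by
  have hz := psiInt_close p z i
  have hw := psiInt_close p w i
  have hmid : ‖psum p (z.appr (i+1)) - psum p (w.appr (i+1))‖ ≤ (p:ℝ) ^ (-(i:ℤ)) := by
    apply psum_modeq p i
    apply cast_modeq
    have h1 := PadicInt.appr_spec (i+1) z
    have h2 := PadicInt.appr_spec (i+1) w
    have heq : ((z.appr (i+1) : ℤ_[p]) - (w.appr (i+1) : ℤ_[p]))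
        = (z - w) - (z - (z.appr (i+1) : ℤ_[p])) + (w - (w.appr (i+1) : ℤ_[p])) := by ring
    rw [heq]
    exact Ideal.add_mem _ (Ideal.sub_mem _ h h1) h2
  have hsplit : psiInt p z - psiInt p w
      = (psiInt p z - psum p (z.appr (i+1)))
        + ((psum p (z.appr (i+1)) - psum p (w.appr (i+1)))
        + (psum p (w.appr (i+1)) - psiInt p w)) := by ring
  rw [hsplit]
  refine le_trans (PadicInt.nonarchimedean _ _) (max_le hz ?_)
  refine le_trans (PadicInt.nonarchimedean _ _) (max_le hmid ?_)
  rw [norm_sub_rev]; exact hw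

lemma psiInt_continuous : Continuous (psiInt p) := by
  rw [Metric.continuous_iff]
  intro z ε hε
  obtain ⟨i, hi⟩ := padic_exists_pow_lt p ε hε
  have hp0 : (0:ℝ) < (p:ℝ) := by exact_mod_cast hp.out.pos
  refine ⟨(p:ℝ) ^ (-((i+1:ℕ):ℤ)), by positivity, fun w hw => ?_⟩
  rw [dist_eq_norm] at hw ⊢
  have hmem : w - z ∈ Ideal.span {(p:ℤ_[p])^(i+1)} := by
    rw [← PadicInt.norm_le_pow_iff_mem_span_pow]
    exact hw.le
  exact lt_of_le_of_lt (psiInt_ucont p hmem) hi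

lemma psiInt_natCast (n : ℕ) : psiInt p (n : ℤ_[p]) = psum p n := by
  refine tendsto_nhds_unique (psiInt_tendsto p (n : ℤ_[p])) ?_
  rw [Metric.tendsto_atTop]
  intro ε hε
  obtain ⟨i, hi⟩ := padic_exists_pow_lt p ε hε
  refine ⟨i + 1, fun j hj => ?_⟩
  rw [dist_eq_norm]
  refine lt_of_le_of_lt ?_ hi
  apply psum_modeq p i
  apply cast_modeq
  have h1 : ((n:ℤ_[p]) - ((n:ℤ_[p]).appr j : ℤ_[p])) ∈ Ideal.span {(p:ℤ_[p])^(i+1)} :=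
    appr_sub_mem p _ hj
  have heq : (((n:ℤ_[p]).appr j : ℤ_[p]) - (n : ℤ_[p]))
      = -((n:ℤ_[p]) - ((n:ℤ_[p]).appr j : ℤ_[p])) := by ring
  rw [heq]
  exact neg_mem h1

lemma psum_coe (n : ℕ) : ((psum p n : ℤ_[p]) : ℚ_[p])
    = ∑ k ∈ (Finset.Ico 1 n).filter (fun k => ¬ (p ∣ k)), ((k : ℚ_[p]))⁻¹ := by
  have h1 : ((psum p n : ℤ_[p]) : ℚ_[p]) = ∑ k ∈ range n, ((pterm p k : ℤ_[p]) : ℚ_[p]) :=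
    map_sum (PadicInt.Coe.ringHom) _ _
  have h2 : ∀ k, ((pterm p k : ℤ_[p]) : ℚ_[p]) = if ¬ p ∣ k then ((k : ℚ_[p]))⁻¹ else 0 := by
    intro k
    by_cases hk : p ∣ k
    · rw [if_neg (not_not.mpr hk), show pterm p k = 0 from dif_pos hk]; rfl
    · rw [if_pos hk, pterm_coe p k hk]
  have h3 : (Finset.Ico 1 n).filter (fun k => ¬ (p ∣ k))
      = (range n).filter (fun k => ¬ (p ∣ k)) := by
    ext k
    simp only [mem_filter, mem_Ico, mem_range]
    constructor
    · rintro ⟨⟨_, hk⟩, hnd⟩; exact ⟨hk, hnd⟩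
    · rintro ⟨hk, hnd⟩
      refine ⟨⟨?_, hk⟩, hnd⟩
      rcases Nat.eq_zero_or_pos k with rfl | h
      · exact absurd (dvd_zero p) hnd
      · exact h
  rw [h1, h3, Finset.sum_filter]
  exact Finset.sum_congr rfl fun k _ => h2 k

/-- For every prime `p`, the function
`n ↦ Σ_{1 ≤ k < n, p ∤ k} 1/k` on positive integers extends to a continuous
function `ψ̃_p : ℤ_p → ℚ_p` with values in `ℤ_p` (all values of norm ≤ 1);
i.e. the limit `ψ̃_p(z) = lim_{n → z} Σ_{1 ≤ k < n, p ∤ k} 1/k` exists in `ℤ_p`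
for every `z ∈ ℤ_p`. -/
theorem padic_polygamma_exists (p : ℕ) [Fact p.Prime] :
    ∃ ψ : ℤ_[p] → ℚ_[p], Continuous ψ ∧ (∀ z : ℤ_[p], ‖ψ z‖ ≤ 1) ∧
      ∀ n : ℕ, 0 < n →
        ψ (n : ℤ_[p]) =
          ∑ k ∈ (Finset.Ico 1 n).filter (fun k => ¬ (p ∣ k)), ((k : ℚ_[p]))⁻¹ := by
  refine ⟨fun z => ((psiInt p z : ℤ_[p]) : ℚ_[p]), ?_, ?_, ?_⟩
  · have hiso : Isometry (fun x : ℤ_[p] => (x : ℚ_[p])) := by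
      apply Isometry.of_dist_eq
      intro a b
      rw [dist_eq_norm, dist_eq_norm, PadicInt.norm_def]
      push_cast
      rfl
    exact hiso.continuous.comp (psiInt_continuous p)
  · intro z
    rw [← PadicInt.norm_def]
    exact PadicInt.norm_le_one _
  · intro n _
    show ((psiInt p ((n:ℕ) : ℤ_[p]) : ℤ_[p]) : ℚ_[p]) = _
    rw [psiInt_natCast, psum_coe]
end

section
/- Let K be a field of characteristic zero, a_0,…,a_d ∈ K, and set ǎ_i = 1 − a_i. Let s_1,…,s_{d+1} be the elementary symmetric functions defined by (T+a_0)⋯(T+a_d) = T^{d+1} + s_1 T^d + ⋯ + s_{d+1}, and put q_{d−m} := −s_{m+1}·t/(1−t) for m = 0,…,d. Define the differential operator P := D^{d+1} − D^d∘q_d + ⋯ + (−1)^d D∘q_1 + (−1)^{d+1} q_0 acting on K[[t]][1/(1−t)] (where D∘q means first multiply by q, then apply D = t·d/dt). Then P∘(1−t) = P_{HG,ǎ}, i.e., for every y, P((1−t)·y) = D^{d+1}y − t·(D+1−a_0)⋯(D+1−a_d)y. In particular y_d := (1−t)·F_{ǎ}(t) satisfies P(y_d) = 0, where F_{ǎ}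 is the hypergeometric series with parameters (1−a_0,…,1−a_d). -/
open PowerSeries

/-- The operator `D = t·d/dt` on formal power series. -/
noncomputable def thetaOp (K : Type*) [Field K] (f : K⟦X⟧) : K⟦X⟧ :=
  PowerSeries.mk fun n => (n : K) * PowerSeries.coeff n f

/-- The operator `D + a`. -/
noncomputable def shiftOp (K : Type*) [Field K] (a : K) (f : K⟦X⟧) : K⟦X⟧ :=
  thetaOp K f + a • f

/-- The hypergeometric power series. -/
noncomputable def hgSeries (K : Type*) [Field K] {d : ℕ} (a : Fin (d + 1) → K) : K⟦X⟧ :=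
  PowerSeries.mk fun n => ∏ i : Fin (d + 1),
    (Polynomial.eval (a i) (ascPochhammer K n) / (Nat.factorial n))

lemma coeff_thetaOp (K : Type*) [Field K] (n : ℕ) (f : K⟦X⟧) :
    coeff n (thetaOp K f) = (n : K) * coeff n f := by
  simp [thetaOp]

lemma coeff_theta_iter (K : Type*) [Field K] (j n : ℕ) (f : K⟦X⟧) :
    coeff n ((thetaOp K)^[j] f) = (n : K) ^ j * coeff n f := by
  induction j with
  | zero => simp
  | succ j ih =>
    rw [Function.iterate_succ_apply', coeff_thetaOp, ih, pow_succ]; ring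

lemma coeff_fold (K : Type*) [Field K] (l : List K) (n : ℕ) (f : K⟦X⟧) :
    coeff n (((l.map (shiftOp K)).foldr (· ∘ ·) id) f) =
      (l.map fun b => (n : K) + b).prod * coeff n f := by
  induction l with
  | nil => simp
  | cons b l ih =>
    simp only [List.map_cons, List.foldr_cons, List.prod_cons, Function.comp_apply]
    rw [shiftOp, map_add, coeff_thetaOp, map_smul, ih, smul_eq_mul]
    ring

lemma coeff_fold' (K : Type*) [Field K] {d : ℕ} (b : Fin (d + 1) → K) (n : ℕ) (f : K⟦X⟧) :
    coeff n (((List.ofFn fun i => shiftOp K (b i)).foldr (· ∘ ·) id) f) =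
      (∏ i : Fin (d + 1), ((n : K) + b i)) * coeff n f := by
  have h1 : (List.ofFn fun i => shiftOp K (b i)) = (List.ofFn b).map (shiftOp K) := by
    rw [List.map_ofFn]; rfl
  rw [h1, coeff_fold, List.map_ofFn, List.prod_ofFn]
  rfl


lemma s0_eq_one (K : Type*) [Field K] (d : ℕ) (a : Fin (d + 1) → K) (s : ℕ → K)
    (hs : (∏ i : Fin (d + 1), (Polynomial.X + Polynomial.C (a i))) =
      ∑ m ∈ Finset.range (d + 2), Polynomial.C (s m) * Polynomial.X ^ (d + 1 - m)) :
    s 0 = 1 := by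
  have hmonic : (∏ i : Fin (d + 1), (Polynomial.X + Polynomial.C (a i))).Monic :=
    Polynomial.monic_prod_of_monic _ _ fun i _ => Polynomial.monic_X_add_C _
  have hdeg : (∏ i : Fin (d + 1), (Polynomial.X + Polynomial.C (a i))).natDegree = d + 1 := by
    rw [Polynomial.natDegree_prod _ _ (fun i _ => (Polynomial.monic_X_add_C (a i)).ne_zero)]
    simp [Polynomial.natDegree_X_add_C]
  have h1 : (∏ i : Fin (d + 1), (Polynomial.X + Polynomial.C (a i))).coeff (d+1) = 1 := by
    have := hmonic.coeff_natDegree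
    rwa [hdeg] at this
  rw [hs, Polynomial.finset_sum_coeff] at h1
  rw [Finset.sum_eq_single 0 ?_ ?_] at h1
  · simpa using h1
  · intro m hm hm0
    simp only [Polynomial.coeff_C_mul, Polynomial.coeff_X_pow]
    have : d + 1 - m ≠ d + 1 := by
      simp only [Finset.mem_range] at hm; omega
    rw [if_neg (fun hcon => this hcon.symm), mul_zero]
  · intro h; simp at h

lemma eval_prod_sub (K : Type*) [Field K] (d : ℕ) (a : Fin (d + 1) → K) (s : ℕ → K)
    (hs : (∏ i : Fin (d + 1), (Polynomial.X + Polynomial.C (a i))) =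
      ∑ m ∈ Finset.range (d + 2), Polynomial.C (s m) * Polynomial.X ^ (d + 1 - m))
    (x : K) :
    ∏ i : Fin (d + 1), (x - a i) =
      x ^ (d + 1) + ∑ j ∈ Finset.range (d + 1), (-1 : K) ^ (d + 1 - j) * s (d - j + 1) * x ^ j := by
  have h0 := s0_eq_one K d a s hs
  have h := congrArg (Polynomial.eval (-x)) hs
  simp only [Polynomial.eval_prod, Polynomial.eval_add, Polynomial.eval_X, Polynomial.eval_C,
    Polynomial.eval_finset_sum, Polynomial.eval_mul, Polynomial.eval_pow] at h
  have hL : ∏ i : Fin (d + 1), (x - a i) = (-1 : K) ^ (d + 1) * ∏ i : Fin (d + 1), (-x + a i) := by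
    calc ∏ i : Fin (d + 1), (x - a i) = ∏ i : Fin (d + 1), (-1 : K) * (-x + a i) :=
          Finset.prod_congr rfl fun i _ => by ring
    _ = (∏ _i : Fin (d + 1), (-1 : K)) * ∏ i : Fin (d + 1), (-x + a i) := Finset.prod_mul_distrib
    _ = _ := by rw [Finset.prod_const, Finset.card_univ, Fintype.card_fin]
  rw [hL, h, Finset.mul_sum]
  have hterm : ∀ m ∈ Finset.range (d + 2),
      (-1 : K) ^ (d + 1) * (s m * (-x) ^ (d + 1 - m)) = (-1 : K) ^ m * s m * x ^ (d + 1 - m) := by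
    intro m hm
    simp only [Finset.mem_range] at hm
    have key : (-1 : K) ^ (d + 1) * (-1 : K) ^ (d + 1 - m) = (-1 : K) ^ m := by
      rw [← pow_add, show d + 1 + (d + 1 - m) = 2 * (d + 1 - m) + m by omega, pow_add, pow_mul]
      norm_num
    rw [neg_pow x, show (-1 : K) ^ (d + 1) * (s m * ((-1 : K) ^ (d + 1 - m) * x ^ (d + 1 - m)))
      = ((-1 : K) ^ (d + 1) * (-1 : K) ^ (d + 1 - m)) * (s m * x ^ (d + 1 - m)) from by ring, key]
    ring
  rw [Finset.sum_congr rfl hterm]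
  rw [Finset.sum_range_succ']
  simp only [pow_zero, one_mul, h0]
  have hrefl := Finset.sum_range_reflect
    (fun m => (-1 : K) ^ (m + 1) * s (m + 1) * x ^ (d + 1 - (m + 1))) (d + 1)
  rw [← hrefl]
  rw [add_comm]
  congr 1
  refine Finset.sum_congr rfl fun j hj => ?_
  simp only [Finset.mem_range] at hj
  have h1 : d + 1 - 1 - j + 1 = d + 1 - j := by omega
  have h2 : d + 1 - (d + 1 - 1 - j + 1) = j := by omega
  have h3 : d + 1 - 1 - j + 1 = d - j + 1 := by omega
  rw [h2, h1]
  rw [show d - j + 1 = d + 1 - j by omega]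


/-- With `s₁,…,s_{d+1}` the elementary symmetric functions of the `aᵢ`
(via `(T+a₀)⋯(T+a_d) = Σ_m s_m T^{d+1−m}`, `s₀ = 1`) and
`q_{d−m} = −s_{m+1}·t/(1−t)`, the operator
`P = D^{d+1} − D^d∘q_d + ⋯ + (−1)^d D∘q₁ + (−1)^{d+1} q₀` satisfies
`P((1−t)·y) = D^{d+1}y − t·(D+1−a₀)⋯(D+1−a_d)y` for all `y`; in particular
`y_d := (1−t)·F_ǎ(t)` (with `ǎᵢ = 1−aᵢ`) satisfies `P(y_d) = 0`.
(Here `1−t` is a unit of `K[[t]]`, with inverse `inv1t`.) -/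
theorem operator_P_comp_one_sub_t
    (K : Type*) [Field K] [CharZero K] (d : ℕ) (a : Fin (d + 1) → K)
    (s : ℕ → K)
    (hs : (∏ i : Fin (d + 1), (Polynomial.X + Polynomial.C (a i))) =
      ∑ m ∈ Finset.range (d + 2), Polynomial.C (s m) * Polynomial.X ^ (d + 1 - m))
    (inv1t : K⟦X⟧) (hinv : (1 - PowerSeries.X) * inv1t = 1)
    (q : ℕ → K⟦X⟧)
    (hq : ∀ j, j ≤ d →
      q j = -(PowerSeries.C (s (d - j + 1)) * PowerSeries.X * inv1t))
    (P : K⟦X⟧ → K⟦X⟧)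
    (hP : ∀ y, P y = (thetaOp K)^[d + 1] y +
      ∑ j ∈ Finset.range (d + 1), ((-1 : K) ^ (d + 1 - j)) • (thetaOp K)^[j] (q j * y)) :
    (∀ y : K⟦X⟧,
      P ((1 - PowerSeries.X) * y) =
        (thetaOp K)^[d + 1] y -
          PowerSeries.X *
            ((List.ofFn fun i : Fin (d + 1) => shiftOp K (1 - a i)).foldr (· ∘ ·) id) y) ∧
    P ((1 - PowerSeries.X) * hgSeries K (fun i => 1 - a i)) = 0 := by
  have hprod := eval_prod_sub K d a s hs
  have key : ∀ y : K⟦X⟧,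
      P ((1 - PowerSeries.X) * y) =
        (thetaOp K)^[d + 1] y -
          PowerSeries.X *
            ((List.ofFn fun i : Fin (d + 1) => shiftOp K (1 - a i)).foldr (· ∘ ·) id) y := by
    intro y
    rw [hP]
    have hqy : ∀ j ∈ Finset.range (d + 1),
        ((-1 : K) ^ (d + 1 - j)) • (thetaOp K)^[j] (q j * ((1 - PowerSeries.X) * y)) =
        ((-1 : K) ^ (d + 1 - j)) • (thetaOp K)^[j]
          (-(PowerSeries.C (s (d - j + 1)) * (PowerSeries.X * y))) := by
      intro j hj
      congr 2
      rw [hq j (by simpa [Nat.lt_succ_iff] using hj)]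
      linear_combination (-(PowerSeries.C (s (d - j + 1)) * PowerSeries.X * y)) * hinv
    rw [Finset.sum_congr rfl hqy]
    ext n
    simp only [map_add, map_sub, map_sum, map_smul, smul_eq_mul, coeff_theta_iter, map_neg,
      coeff_C_mul]
    cases n with
    | zero =>
      simp [pow_succ, PowerSeries.coeff_zero_eq_constantCoeff]
    | succ m =>
      rw [PowerSeries.coeff_succ_X_mul]
      have hco : coeff (m + 1) ((1 - PowerSeries.X) * y)
          = coeff (m + 1) y - coeff m y := by
        rw [sub_mul, one_mul, map_sub, PowerSeries.coeff_succ_X_mul]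
      rw [hco, PowerSeries.coeff_succ_X_mul, coeff_fold']
      have hstep : ∀ j ∈ Finset.range (d + 1),
          (-1 : K) ^ (d + 1 - j) * (((m + 1 : ℕ) : K) ^ j * -(s (d - j + 1) * coeff m y)) =
          ((-1 : K) ^ (d + 1 - j) * s (d - j + 1) * ((m + 1 : ℕ) : K) ^ j) *
            (-(coeff m y)) := fun j _ => by ring
      rw [Finset.sum_congr rfl hstep, ← Finset.sum_mul]
      have hpp : (∏ i : Fin (d + 1), ((m : K) + (1 - a i)))
          = ∏ i : Fin (d + 1), (((m + 1 : ℕ) : K) - a i) :=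
        Finset.prod_congr rfl fun i _ => by push_cast; ring
      rw [hpp]
      linear_combination (coeff m y) * hprod (((m + 1 : ℕ) : K))
  refine ⟨key, ?_⟩
  rw [key]
  have hfold : (thetaOp K)^[d + 1] (hgSeries K (fun i => 1 - a i)) =
      PowerSeries.X *
        ((List.ofFn fun i : Fin (d + 1) => shiftOp K (1 - a i)).foldr (· ∘ ·) id)
          (hgSeries K (fun i => 1 - a i)) := by
    ext n
    rw [coeff_theta_iter]
    cases n with
    | zero =>
      simp [pow_succ, PowerSeries.coeff_zero_eq_constantCoeff]
    | succ m =>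
      rw [PowerSeries.coeff_succ_X_mul, coeff_fold']
      simp only [hgSeries, PowerSeries.coeff_mk]
      have hfac : ((Nat.factorial (m + 1) : K)) ≠ 0 :=
        Nat.cast_ne_zero.mpr (Nat.factorial_ne_zero _)
      have hfac' : ((Nat.factorial m : K)) ≠ 0 :=
        Nat.cast_ne_zero.mpr (Nat.factorial_ne_zero _)
      have hE : ∀ i : Fin (d + 1),
          Polynomial.eval (1 - a i) (ascPochhammer K (m + 1)) =
          Polynomial.eval (1 - a i) (ascPochhammer K m) * ((1 - a i) + (m : K)) := by
        intro i
        rw [ascPochhammer_succ_right]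
        simp [Polynomial.eval_mul]
      have hx : ((m + 1 : ℕ) : K) ≠ 0 := Nat.cast_ne_zero.mpr (by omega)
      have hterm : ∀ i : Fin (d + 1), i ∈ Finset.univ →
          Polynomial.eval (1 - a i) (ascPochhammer K (m + 1)) / ((Nat.factorial (m + 1) : K)) =
          (Polynomial.eval (1 - a i) (ascPochhammer K m) * ((1 - a i) + (m : K))) /
            (((m + 1 : ℕ) : K) * ((Nat.factorial m : K))) := by
        intro i _
        rw [hE i]
        congr 1
        rw [Nat.factorial_succ, Nat.cast_mul]
      rw [Finset.prod_congr rfl hterm, Finset.prod_div_distrib, Finset.prod_div_distrib,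
        Finset.prod_const, Finset.prod_const, Finset.card_univ, Fintype.card_fin,
        Finset.prod_mul_distrib]
      have hmul : (∏ i : Fin (d + 1), ((m : K) + (1 - a i)))
          = ∏ i : Fin (d + 1), ((1 - a i) + (m : K)) :=
        Finset.prod_congr rfl fun i _ => by ring
      rw [hmul, mul_pow, mul_div_assoc', mul_div_assoc',
        div_eq_div_iff (mul_ne_zero (pow_ne_zero _ hx) (pow_ne_zero _ hfac'))
          (pow_ne_zero _ hfac')]
      ring
  rw [hfold]
  simp
end

section
/- In the setting of a ℚ-algebra R with derivation ∂, modules M, N with compatible connections D, and a pairing Q with ∂Q(x,y) = Q(Dx,y)+Q(x,Dy), suppose Q(D^iω, D^jω̌) = 0 for all i+j < d, i,j ≥ 0. Then (d+1)·∂(Q(ω, D^d ω̌)) = (−1)^d Q(D^{d+1}ω, ω̌) + Q(ω, D^{d+1}ω̌). -/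
/-- Telescoping alternating sum lemma. -/
lemma tele_sum {R : Type*} [CommRing R] (f : ℕ → R) (n : ℕ) :
    ∑ i ∈ Finset.range n, (-1 : R) ^ i * (f (i + 1) + f i)
      = f 0 - (-1 : R) ^ n * f n := by
  induction n with
  | zero => simp
  | succ n ih =>
      rw [Finset.sum_range_succ, ih, pow_succ]
      ring

/-- In the setting of a `ℚ`-algebra `R` with derivation `del`,
modules with compatible connections and pairing `Q` with
`delQ(x,y) = Q(Dx,y) + Q(x,Dy)`, if `Q(D^iω, D^jωc) = 0` for all `i+j < d`, then
`(d+1)·del(Q(ω, D^d ωc)) = (−1)^d Q(D^{d+1}ω, ωc) + Q(ω, D^{d+1}ωc)`. -/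
theorem pairing_alternating_sum
    (R : Type*) [CommRing R] [Algebra ℚ R] (del : Derivation ℚ R R)
    (M N : Type*) [AddCommGroup M] [Module R M] [AddCommGroup N] [Module R N]
    (DM : M → M) (DN : N → N)
    (hDMadd : ∀ x y : M, DM (x + y) = DM x + DM y)
    (hDNadd : ∀ x y : N, DN (x + y) = DN x + DN y)
    (hDMleib : ∀ (r : R) (x : M), DM (r • x) = del r • x + r • DM x)
    (hDNleib : ∀ (r : R) (y : N), DN (r • y) = del r • y + r • DN y)
    (Q : M →ₗ[R] N →ₗ[R] R)
    (hQ : ∀ (x : M) (y : N), del (Q x y) = Q (DM x) y + Q x (DN y))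
    (d : ℕ) (ω : M) (ωc : N)
    (hvan : ∀ i j : ℕ, i + j < d → Q (DM^[i] ω) (DN^[j] ωc) = 0) :
    (d + 1 : ℕ) • del (Q ω (DN^[d] ωc)) =
      (-1 : R) ^ d * Q (DM^[d + 1] ω) ωc + Q ω (DN^[d + 1] ωc) := by
  -- derived identity on iterates
  have hQiter : ∀ i j : ℕ, del (Q (DM^[i] ω) (DN^[j] ωc)) =
      Q (DM^[i + 1] ω) (DN^[j] ωc) + Q (DM^[i] ω) (DN^[j + 1] ωc) := by
    intro i j
    rw [Function.iterate_succ_apply' DM, Function.iterate_succ_apply' DN]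
    exact hQ _ _
  -- telescoping: Q(D^i ω, D^{d-i} ωc) = (-1)^i Q(ω, D^d ωc) for i ≤ d
  have key : ∀ i, i ≤ d → Q (DM^[i] ω) (DN^[d - i] ωc)
      = (-1 : R) ^ i * Q ω (DN^[d] ωc) := by
    intro i
    induction i with
    | zero => simp
    | succ i ih =>
        intro hi
        have hi' : i ≤ d := Nat.le_of_succ_le hi
        have hlt : i + (d - 1 - i) < d := by omega
        have h0 := hQiter i (d - 1 - i)
        rw [hvan i (d - 1 - i) hlt, map_zero] at h0
        have e1 : d - 1 - i = d - (i + 1) := by omega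
        have e2 : d - (i + 1) + 1 = d - i := by omega
        rw [e1, e2] at h0
        have := ih hi'
        rw [pow_succ]
        linear_combination -h0 - this
  -- the basic relation for each i ≤ d
  set f : ℕ → R := fun j => Q (DM^[j] ω) (DN^[d + 1 - j] ωc) with hf
  have rel : ∀ i ∈ Finset.range (d + 1),
      (-1 : R) ^ i * (f (i + 1) + f i) = del (Q ω (DN^[d] ωc)) := by
    intro i hi
    rw [Finset.mem_range] at hi
    have hi' : i ≤ d := Nat.lt_succ_iff.mp hi
    have h0 := hQiter i (d - i)
    rw [key i hi'] at h0
    have hdel : del ((-1 : R) ^ i * Q ω (DN^[d] ωc))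
        = (-1 : R) ^ i * del (Q ω (DN^[d] ωc)) := by
      rw [Derivation.leibniz]
      have : del ((-1 : R) ^ i) = 0 := by
        rcases Nat.even_or_odd i with h | h
        · rw [(h : Even i).neg_one_pow]; simp
        · rw [(h : Odd i).neg_one_pow]; simp
      rw [this]; simp [mul_comm]
    rw [hdel] at h0
    have e1 : d - i = d + 1 - (i + 1) := by omega
    have e2 : d + 1 - (i + 1) + 1 = d + 1 - i := by omega
    rw [e1, e2] at h0
    have hsq : (-1 : R) ^ i * (-1 : R) ^ i = 1 := by
      rw [← pow_add]; exact Even.neg_one_pow ⟨i, by ring⟩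
    calc (-1 : R) ^ i * (f (i + 1) + f i)
        = (-1 : R) ^ i * ((-1 : R) ^ i * del (Q ω (DN^[d] ωc))) := by rw [← h0]
      _ = del (Q ω (DN^[d] ωc)) := by rw [← mul_assoc, hsq, one_mul]
  have hsum : ∑ i ∈ Finset.range (d + 1), (-1 : R) ^ i * (f (i + 1) + f i)
      = (d + 1 : ℕ) • del (Q ω (DN^[d] ωc)) := by
    rw [Finset.sum_congr rfl rel, Finset.sum_const, Finset.card_range]
  rw [← hsum, tele_sum]
  have hf0 : f 0 = Q ω (DN^[d + 1] ωc) := by simp [hf]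
  have hfd : f (d + 1) = Q (DM^[d + 1] ω) ωc := by simp [hf]
  rw [hf0, hfd, pow_succ]
  ring
end

section
/- Let K be a field of characteristic zero, A = K[t, (t−t²)^{−1}], D = t·d/dt. Let a_0,…,a_d ∈ K with Σa_i =: s, and let M, N be A-modules with connections and Q a D-compatible A-bilinear pairing as above. Suppose ω ∈ M, ω̌ ∈ N satisfy the hypergeometric equations D^{d+1}ω = t(D+a_0)⋯(D+a_d)ω and D^{d+1}ω̌ = t(D+1−a_0)⋯(D+1−a_d)ω̌, and Q(D^iω, D^jω̌) = 0 for i+j < d. Then q(t) := Q(ω, D^dω̌) ∈ A satisfies the differential equation dq/dt = q/(1−t); hence if q ∈ K[t,(t−t²)^{−1}] then q = C·(1−t)^{−1} for some constant C ∈ K. -/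
open Polynomial

section Aux

variable {K R M : Type*} [CommSemiring K] [CommRing R] [Algebra K R]
  [AddCommGroup M] [Module R M]

variable (R) (Dop : M → M) (ω : M)

/-- Span of low-order `D`-iterates of `ω`. -/
def auxSpanIter (m : ℕ) : Submodule R M :=
  Submodule.span R ((fun k => Dop^[k] ω) '' Set.Iio m)

lemma auxSpanIter_mono {m m' : ℕ} (h : m ≤ m') :
    auxSpanIter R Dop ω m ≤ auxSpanIter R Dop ω m' :=
  Submodule.span_mono (Set.image_mono (Set.Iio_subset_Iio h))

variable {R Dop ω}
variable (ε : R → R)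

lemma auxD_mem (hadd : ∀ x y : M, Dop (x + y) = Dop x + Dop y)
    (hleib : ∀ (r : R) (x : M), Dop (r • x) = ε r • x + r • Dop x)
    {m : ℕ} {v : M} (hv : v ∈ auxSpanIter R Dop ω m) :
    Dop v ∈ auxSpanIter R Dop ω (m + 1) := by
  have h0 : Dop 0 = 0 := by
    have := hadd 0 0
    rw [add_zero] at this
    exact (left_eq_add.mp this)
  induction hv using Submodule.span_induction with
  | mem x hx =>
      obtain ⟨k, hk, rfl⟩ := hx
      refine Submodule.subset_span ⟨k + 1, ?_, ?_⟩
      · exact Set.mem_Iio.mpr (Nat.succ_lt_succ (Set.mem_Iio.mp hk))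
      · exact Function.iterate_succ_apply' Dop k ω
  | zero => rw [h0]; exact Submodule.zero_mem _
  | add x y hx hy ihx ihy => rw [hadd]; exact Submodule.add_mem _ ihx ihy
  | smul r x hx ih =>
      rw [hleib]
      exact Submodule.add_mem _
        (Submodule.smul_mem _ _ (auxSpanIter_mono R Dop ω (Nat.le_succ m) hx))
        (Submodule.smul_mem _ _ ih)

lemma aux_expand (hadd : ∀ x y : M, Dop (x + y) = Dop x + Dop y)
    (hleib : ∀ (r : R) (x : M), Dop (r • x) = ε r • x + r • Dop x)
    (hε : ∀ c : K, ε (algebraMap K R c) = 0) :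
    ∀ (m : ℕ) (c : List K), c.length = m + 1 →
    ∃ w ∈ auxSpanIter R Dop ω m,
      ((c.map (fun ci (v : M) => Dop v + (algebraMap K R ci) • v)).foldr (· ∘ ·) id) ω
        = Dop^[m + 1] ω + (algebraMap K R c.sum) • Dop^[m] ω + w := by
  intro m
  induction m with
  | zero =>
      rintro (_ | ⟨ci, c'⟩) hc
      · simp at hc
      · have hnil : c' = [] := by simpa using hc
        subst hnil
        refine ⟨0, Submodule.zero_mem _, ?_⟩
        simp
  | succ m ih =>
      rintro (_ | ⟨ci, c'⟩) hc
      · simp at hc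
      · have hc' : c'.length = m + 1 := by simpa using hc
        obtain ⟨w, hw, hu⟩ := ih c' hc'
        refine ⟨(algebraMap K R ci * algebraMap K R c'.sum) • Dop^[m] ω + Dop w
            + (algebraMap K R ci) • w, ?_, ?_⟩
        · refine Submodule.add_mem _ (Submodule.add_mem _ ?_ ?_) ?_
          · exact Submodule.smul_mem _ _
              (Submodule.subset_span ⟨m, Set.mem_Iio.mpr (Nat.lt_succ_self m), rfl⟩)
          · exact auxD_mem ε hadd hleib hw
          · exact Submodule.smul_mem _ _ (auxSpanIter_mono R Dop ω (Nat.le_succ m) hw)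
        · simp only [List.map_cons, List.foldr_cons, Function.comp_apply]
          rw [hu]
          rw [hadd, hadd, hleib, hε, zero_smul, zero_add]
          rw [show Dop (Dop^[m+1] ω) = Dop^[m+1+1] ω from (Function.iterate_succ_apply' Dop (m+1) ω).symm,
            show Dop (Dop^[m] ω) = Dop^[m+1] ω from (Function.iterate_succ_apply' Dop m ω).symm]
          simp only [List.sum_cons, map_add, add_smul, smul_add, smul_smul]
          abel

end Aux


lemma del_algebraMap_poly {K : Type*} [Field K]
    (del : Derivation K (RatFunc K) (RatFunc K)) (hdel : del RatFunc.X = 1) (p : K[X]) :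
    del (algebraMap K[X] (RatFunc K) p) = algebraMap K[X] (RatFunc K) (derivative p) := by
  have h : del.compAlgebraMap K[X] = Polynomial.mkDerivation K (1 : RatFunc K) := by
    apply Polynomial.derivation_ext
    simp [RatFunc.algebraMap_X, hdel]
  have h2 := congrFun (congrArg (fun D : Derivation K K[X] (RatFunc K) =>
    (D : K[X] → RatFunc K)) h) p
  simpa [Polynomial.mkDerivation_apply, Algebra.smul_def] using h2

lemma del_eq_zero_const {K : Type*} [Field K] [CharZero K]
    (del : Derivation K (RatFunc K) (RatFunc K)) (hdel : del RatFunc.X = 1)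
    {f : RatFunc K} (hf : del f = 0) : ∃ C : K, f = algebraMap K (RatFunc K) C := by
  have hdn : (algebraMap K[X] (RatFunc K)) f.denom ≠ 0 :=
    RatFunc.algebraMap_ne_zero f.denom_ne_zero
  have key : f * algebraMap K[X] (RatFunc K) f.denom = algebraMap K[X] (RatFunc K) f.num :=
    ((div_eq_iff hdn).mp (RatFunc.num_div_denom f)).symm
  have key2 : f * algebraMap K[X] (RatFunc K) (derivative f.denom)
      = algebraMap K[X] (RatFunc K) (derivative f.num) := by
    have h := congrArg del key
    rw [Derivation.leibniz, smul_eq_mul, smul_eq_mul, del_algebraMap_poly del hdel,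
      del_algebraMap_poly del hdel, hf, mul_zero, add_zero] at h
    exact h
  have hpoly : f.num * derivative f.denom = derivative f.num * f.denom := by
    apply RatFunc.algebraMap_injective K
    rw [map_mul, map_mul, ← key, mul_comm f _, mul_assoc, key2, mul_comm]
  have hdvd : f.denom ∣ derivative f.denom := by
    have h1 : f.denom ∣ f.num * derivative f.denom := by
      rw [hpoly]; exact dvd_mul_left _ _
    exact (RatFunc.isCoprime_num_denom f).symm.dvd_of_dvd_mul_left h1
  have hd0 : derivative f.denom = 0 :=
    Polynomial.eq_zero_of_dvd_of_degree_lt hdvd (Polynomial.degree_derivative_lt f.denom_ne_zero)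
  have hdenom1 : f.denom = 1 :=
    ((RatFunc.monic_denom f).natDegree_eq_zero).mp
      (Polynomial.natDegree_eq_zero_of_derivative_eq_zero hd0)
  have hnum' : derivative f.num = 0 := by
    have h := hpoly
    rw [hd0, hdenom1, mul_zero, mul_one] at h
    exact h.symm
  have hnum : f.num = Polynomial.C (f.num.coeff 0) :=
    Polynomial.eq_C_of_natDegree_eq_zero (Polynomial.natDegree_eq_zero_of_derivative_eq_zero hnum')
  refine ⟨f.num.coeff 0, ?_⟩
  conv_lhs => rw [← RatFunc.num_div_denom f, hdenom1, hnum]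
  rw [map_one, div_one, IsScalarTower.algebraMap_apply K K[X] (RatFunc K),
    Polynomial.algebraMap_eq]



/-- Work in `K(t)` (formalizing `A = K[t,(t−t²)⁻¹] ⊂ K(t)`), with
`del` the derivation `d/dt` (`del t = 1`) and `D = t·d/dt`. Given modules `M`, `N`
with connections and a `D`-compatible pairing `Q`, if `ω`, `ω̌` satisfy the
hypergeometric equations `D^{d+1}ω = t(D+a₀)⋯(D+a_d)ω`,
`D^{d+1}ω̌ = t(D+1−a₀)⋯(D+1−a_d)ω̌` and `Q(D^iω, D^jω̌) = 0` for `i+j < d`, then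
`q := Q(ω, D^dω̌)` satisfies `(1−t)·dq/dt = q`; hence if `q ∈ K[t,(t−t²)⁻¹]` then
`q = C·(1−t)⁻¹` for some constant `C ∈ K`. -/
theorem pairing_with_unit_root_is_constant
    (K : Type*) [Field K] [CharZero K]
    (del : Derivation K (RatFunc K) (RatFunc K)) (hdel : del RatFunc.X = 1)
    (d : ℕ) (a : Fin (d + 1) → K)
    (M N : Type*) [AddCommGroup M] [Module (RatFunc K) M]
    [AddCommGroup N] [Module (RatFunc K) N]
    (DM : M → M) (DN : N → N)
    (hDMadd : ∀ x y : M, DM (x + y) = DM x + DM y)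
    (hDNadd : ∀ x y : N, DN (x + y) = DN x + DN y)
    (hDMleib : ∀ (r : RatFunc K) (x : M), DM (r • x) = (RatFunc.X * del r) • x + r • DM x)
    (hDNleib : ∀ (r : RatFunc K) (y : N), DN (r • y) = (RatFunc.X * del r) • y + r • DN y)
    (Q : M →ₗ[RatFunc K] N →ₗ[RatFunc K] RatFunc K)
    (hQ : ∀ (x : M) (y : N),
      RatFunc.X * del (Q x y) = Q (DM x) y + Q x (DN y))
    (ω : M) (ωc : N)
    (hω : DM^[d + 1] ω = (RatFunc.X : RatFunc K) •
      ((List.ofFn fun i : Fin (d + 1) =>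
        fun v : M => DM v + (algebraMap K (RatFunc K) (a i)) • v).foldr (· ∘ ·) id) ω)
    (hωc : DN^[d + 1] ωc = (RatFunc.X : RatFunc K) •
      ((List.ofFn fun i : Fin (d + 1) =>
        fun v : N => DN v + (algebraMap K (RatFunc K) (1 - a i)) • v).foldr (· ∘ ·) id) ωc)
    (hvan : ∀ i j : ℕ, i + j < d → Q (DM^[i] ω) (DN^[j] ωc) = 0) :
    (1 - RatFunc.X) * del (Q ω (DN^[d] ωc)) = Q ω (DN^[d] ωc) ∧
    (Q ω (DN^[d] ωc) ∈
        Algebra.adjoin K {RatFunc.X, (RatFunc.X - RatFunc.X ^ 2)⁻¹} →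
      ∃ C : K, Q ω (DN^[d] ωc) =
        algebraMap K (RatFunc K) C * (1 - RatFunc.X)⁻¹) := by
  haveI : CharZero (RatFunc K) :=
    charZero_of_injective_algebraMap (RatFunc.algebraMap_injective K)
  -- basic recurrence
  have hrec : ∀ i j : ℕ, RatFunc.X * del (Q (DM^[i] ω) (DN^[j] ωc))
      = Q (DM^[i+1] ω) (DN^[j] ωc) + Q (DM^[i] ω) (DN^[j+1] ωc) := by
    intro i j
    rw [Function.iterate_succ_apply', Function.iterate_succ_apply']
    exact hQ _ _
  -- level d
  have hlev : ∀ i j : ℕ, i + j = d →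
      Q (DM^[i] ω) (DN^[j] ωc) = (-1 : RatFunc K) ^ i * Q ω (DN^[d] ωc) := by
    intro i
    induction i with
    | zero =>
        intro j hj
        obtain rfl : j = d := by omega
        simp
    | succ i ih =>
        intro j hj
        have h := hrec i j
        rw [hvan i j (by omega), map_zero, mul_zero] at h
        exact (by linear_combination -h - ih (j+1) (by omega) :
          Q (DM^[i+1] ω) (DN^[j] ωc) = (-1 : RatFunc K) ^ (i+1) * Q ω (DN^[d] ωc))
  -- constants pass through del
  have hdelconst : ∀ (i : ℕ) (x : RatFunc K),
      del ((-1 : RatFunc K) ^ i * x) = (-1 : RatFunc K) ^ i * del x := by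
    intro i x
    have h1 : del ((-1 : RatFunc K) ^ i) = 0 := by
      rcases neg_one_pow_eq_or (RatFunc K) i with h | h <;> rw [h] <;> simp
    rw [Derivation.leibniz, smul_eq_mul, smul_eq_mul, h1, mul_zero, add_zero]
  -- level d + 1
  have hlev1 : ∀ i j : ℕ, i + j = d + 1 →
      Q (DM^[i] ω) (DN^[j] ωc) = (-1 : RatFunc K) ^ i *
        (Q ω (DN^[d+1] ωc) - (i : RatFunc K) * (RatFunc.X * del (Q ω (DN^[d] ωc)))) := by
    intro i
    induction i with
    | zero =>
        intro j hj
        obtain rfl : j = d + 1 := by omega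
        simp
    | succ i ih =>
        intro j hj
        have h := hrec i j
        rw [hlev i j (by omega), hdelconst] at h
        have h2 := ih (j+1) (by omega)
        push_cast
        linear_combination -h - h2
  -- M-side hypergeometric relation
  have hlist : (List.ofFn fun i : Fin (d + 1) =>
        fun v : M => DM v + (algebraMap K (RatFunc K) (a i)) • v)
      = ((List.ofFn a).map (fun ci (v : M) => DM v + (algebraMap K (RatFunc K) ci) • v)) := by
    rw [List.map_ofFn]; rfl
  obtain ⟨w, hw, hPM⟩ := aux_expand (Dop := DM) (ω := ω)
    (fun r => RatFunc.X * del r) hDMadd hDMleib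
    (fun c => by show RatFunc.X * del (algebraMap K (RatFunc K) c) = 0; rw [Derivation.map_algebraMap, mul_zero]) d (List.ofFn a) (by simp)
  rw [hlist, hPM] at hω
  have hw0 : Q w ωc = 0 := by
    have hle : auxSpanIter (RatFunc K) DM ω d ≤ LinearMap.ker (Q.flip ωc) := by
      rw [auxSpanIter, Submodule.span_le]
      rintro x ⟨k, hk, rfl⟩
      simp only [SetLike.mem_coe, LinearMap.mem_ker, LinearMap.flip_apply]
      have := hvan k 0 (by simpa using hk)
      simpa using this
    have := hle hw
    simpa using this
  have hlevd0 : Q (DM^[d] ω) ωc = (-1 : RatFunc K) ^ d * Q ω (DN^[d] ωc) := by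
    have := hlev d 0 (by omega)
    simpa using this
  have hD : Q (DM^[d+1] ω) ωc = RatFunc.X * (Q (DM^[d+1] ω) ωc
      + algebraMap K (RatFunc K) ((List.ofFn a).sum)
        * ((-1 : RatFunc K) ^ d * Q ω (DN^[d] ωc))) := by
    have h := congrArg (fun v => Q v ωc) hω
    simp only [map_add, map_smul, LinearMap.add_apply, LinearMap.smul_apply,
      smul_eq_mul] at h
    rw [hw0, add_zero, hlevd0] at h
    exact h
  -- N-side hypergeometric relation
  have hlistN : (List.ofFn fun i : Fin (d + 1) =>
        fun v : N => DN v + (algebraMap K (RatFunc K) (1 - a i)) • v)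
      = ((List.ofFn fun i => 1 - a i).map
          (fun ci (v : N) => DN v + (algebraMap K (RatFunc K) ci) • v)) := by
    rw [List.map_ofFn]; rfl
  obtain ⟨wN, hwN, hPN⟩ := aux_expand (Dop := DN) (ω := ωc)
    (fun r => RatFunc.X * del r) hDNadd hDNleib
    (fun c => by show RatFunc.X * del (algebraMap K (RatFunc K) c) = 0; rw [Derivation.map_algebraMap, mul_zero]) d (List.ofFn fun i => 1 - a i) (by simp)
  rw [hlistN, hPN] at hωc
  have hwN0 : Q ω wN = 0 := by
    have hle : auxSpanIter (RatFunc K) DN ωc d ≤ LinearMap.ker (Q ω) := by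
      rw [auxSpanIter, Submodule.span_le]
      rintro x ⟨k, hk, rfl⟩
      simp only [SetLike.mem_coe, LinearMap.mem_ker]
      have := hvan 0 k (by simpa using hk)
      simpa using this
    exact hle hwN
  have hE : Q ω (DN^[d+1] ωc) = RatFunc.X * (Q ω (DN^[d+1] ωc)
      + algebraMap K (RatFunc K) ((List.ofFn fun i => 1 - a i).sum)
        * Q ω (DN^[d] ωc)) := by
    conv_lhs => rw [hωc]
    rw [LinearMap.map_smul, map_add, map_add, hwN0, add_zero, LinearMap.map_smul, smul_eq_mul, smul_eq_mul]
  -- sum of the two coefficient lists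
  have hsum : algebraMap K (RatFunc K) ((List.ofFn a).sum)
      + algebraMap K (RatFunc K) ((List.ofFn fun i => 1 - a i).sum)
      = ((d : RatFunc K) + 1) := by
    rw [← map_add]
    have : (List.ofFn a).sum + (List.ofFn fun i => 1 - a i).sum = ((d : K) + 1) := by
      rw [List.sum_ofFn, List.sum_ofFn, ← Finset.sum_add_distrib]
      simp
    rw [this, map_add, map_natCast, map_one]
  -- the combination
  have hC : Q (DM^[d+1] ω) ωc = (-1 : RatFunc K) ^ (d+1) *
      (Q ω (DN^[d+1] ωc) - ((d : RatFunc K) + 1)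
        * (RatFunc.X * del (Q ω (DN^[d] ωc)))) := by
    have := hlev1 (d+1) 0 (by omega)
    simp only [Function.iterate_zero_apply] at this
    push_cast at this
    exact this
  have hmain : (1 - RatFunc.X) * del (Q ω (DN^[d] ωc)) = Q ω (DN^[d] ωc) := by
    have hn : ((d : RatFunc K) + 1) * RatFunc.X ≠ 0 := by
      refine mul_ne_zero ?_ RatFunc.X_ne_zero
      have : ((d : RatFunc K) + 1) = ((d + 1 : ℕ) : RatFunc K) := by push_cast; ring
      rw [this]
      exact Nat.cast_ne_zero.mpr (Nat.succ_ne_zero d)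
    apply mul_left_cancel₀ hn
    rw [pow_succ] at hC
    rcases neg_one_pow_eq_or (RatFunc K) d with hpar | hpar <;>
      rw [hpar] at hD hC
    · linear_combination hD + hE - (1 - RatFunc.X) * hC
        + RatFunc.X * Q ω (DN^[d] ωc) * hsum
    · linear_combination -hD + hE + (1 - RatFunc.X) * hC
        + RatFunc.X * Q ω (DN^[d] ωc) * hsum
  refine ⟨hmain, fun _ => ?_⟩
  have hg : del ((1 - RatFunc.X) * Q ω (DN^[d] ωc)) = 0 := by
    rw [Derivation.leibniz, smul_eq_mul, smul_eq_mul, map_sub,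
      Derivation.map_one_eq_zero, hdel, zero_sub]
    linear_combination hmain
  obtain ⟨C, hCc⟩ := del_eq_zero_const del hdel hg
  have h1X : (1 - RatFunc.X : RatFunc K) ≠ 0 := by
    intro h
    have hx1 : (RatFunc.X : RatFunc K) = 1 := by linear_combination -h
    have h2 := RatFunc.algebraMap_injective K
      (by rw [RatFunc.algebraMap_X, map_one, hx1] :
        algebraMap K[X] (RatFunc K) Polynomial.X = algebraMap K[X] (RatFunc K) 1)
    exact (fun e => by simpa using congrArg (fun p => Polynomial.coeff p 0) e :
      (Polynomial.X : K[X]) ≠ 1) h2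
  refine ⟨C, ?_⟩
  rw [RatFunc.algebraMap_eq_C] at hCc ⊢
  field_simp
  linear_combination hCc
end

section
/- Let A be an integral domain, d ≥ 1, n_0,…,n_d ≥ 2 integers with n_0⋯n_d invertible in A, and t ∈ A with t(1−t) ∈ A^×. Then the affine scheme U = Spec A[x_0,…,x_d]/((1−x_0^{n_0})⋯(1−x_d^{n_d}) − t) is smooth over A. -/
open MvPolynomial TensorProduct

section HyperAux

variable {A : Type*} [CommRing A] {d : ℕ}

/-- The hypergeometric polynomial. -/
noncomputable def hgPoly (n : Fin (d + 1) → ℕ) (t : A) : MvPolynomial (Fin (d + 1)) A :=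
  (∏ i : Fin (d + 1), (1 - (X i) ^ (n i))) - C t

/-- Reduced partial derivative generators. -/
noncomputable def hgDp (n : Fin (d + 1) → ℕ) (i : Fin (d + 1)) : MvPolynomial (Fin (d + 1)) A :=
  X i ^ (n i - 1) * ∏ j ∈ Finset.univ.erase i, (1 - (X j) ^ (n j))

lemma hg_pderiv_prod_zero {σ R : Type*} [CommRing R] [DecidableEq σ] (i : σ)
    (s : Finset σ) (g : σ → MvPolynomial σ R) (h : ∀ j ∈ s, pderiv i (g j) = 0) :
    pderiv i (∏ j ∈ s, g j) = 0 := by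
  induction s using Finset.cons_induction with
  | empty => simp
  | cons a s ha ih =>
    rw [Finset.prod_cons, pderiv_mul, h a (Finset.mem_cons_self a s),
      ih fun j hj => h j (Finset.mem_cons_of_mem hj)]
    ring

lemma hg_pow_eq (n : Fin (d + 1) → ℕ) (hn : ∀ i, 2 ≤ n i) (i : Fin (d + 1)) :
    (X i : MvPolynomial (Fin (d + 1)) A) ^ (n i) = X i * X i ^ (n i - 1) := by
  have h := hn i
  conv_lhs => rw [show n i = 1 + (n i - 1) from by omega]
  rw [pow_add, pow_one]

lemma hg_pderiv (n : Fin (d + 1) → ℕ) (hn : ∀ i, 2 ≤ n i) (t : A) (i : Fin (d + 1)) :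
    pderiv i (hgPoly n t) = -(C (n i : A)) * hgDp n i := by
  classical
  have hC : (C ((n i : ℕ) : A) : MvPolynomial (Fin (d + 1)) A) = ((n i : ℕ) :
      MvPolynomial (Fin (d + 1)) A) := map_natCast C (n i)
  rw [hgPoly, hgDp, map_sub, pderiv_C, sub_zero,
    ← Finset.mul_prod_erase Finset.univ _ (Finset.mem_univ i), pderiv_mul,
    hg_pderiv_prod_zero i _ _ (fun j hj => ?_), mul_zero, add_zero]
  · rw [map_sub, pderiv_one, pderiv_pow, pderiv_X_self, zero_sub, hC]
    ring
  · rw [map_sub, pderiv_one, pderiv_pow, pderiv_X_of_ne (Finset.ne_of_mem_erase hj), zero_sub]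
    ring

lemma hg_span_top (n : Fin (d + 1) → ℕ) (hn : ∀ i, 2 ≤ n i) (t : A)
    (htu : IsUnit t) (h1t : IsUnit (1 - t)) :
    Ideal.span (Set.range (fun o : Option (Fin (d + 1)) =>
      o.elim (hgPoly n t) (hgDp n))) = ⊤ := by
  classical
  set J := Ideal.span (Set.range (fun o : Option (Fin (d + 1)) =>
      o.elim (hgPoly n t) (hgDp n))) with hJ
  set q := Ideal.Quotient.mk J with hq
  have h0 : q (hgPoly n t) = 0 :=
    Ideal.Quotient.eq_zero_iff_mem.mpr (Ideal.subset_span ⟨none, rfl⟩)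
  have hD : ∀ i, q (hgDp n i) = 0 := fun i =>
    Ideal.Quotient.eq_zero_iff_mem.mpr (Ideal.subset_span ⟨some i, rfl⟩)
  have hta : ∀ i, q (C t) * q (X i ^ (n i - 1)) = 0 := by
    intro i
    have hid : (C t : MvPolynomial (Fin (d + 1)) A) * X i ^ (n i - 1) =
        -(X i ^ (n i - 1)) * hgPoly n t
          + (1 - X i * X i ^ (n i - 1)) * hgDp n i := by
      rw [hgPoly, hgDp, ← Finset.mul_prod_erase Finset.univ _ (Finset.mem_univ i),
        hg_pow_eq n hn i]
      ring
    have := congrArg q hid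
    rw [map_mul] at this
    rw [this]
    simp [h0, hD i]
  have htui : ∀ i, q (C t) * q (1 - X i ^ n i) = q (C t) := by
    intro i
    rw [hg_pow_eq n hn i, map_sub, map_one, map_mul]
    linear_combination (-(q (X i))) * hta i
  have hF : q (∏ i : Fin (d + 1), (1 - (X i) ^ (n i))) = q (C t) := by
    have := congrArg q (show hgPoly n t =
      (∏ i : Fin (d + 1), (1 - (X i) ^ (n i))) - C t from rfl)
    rw [h0, map_sub] at this
    linear_combination -this
  have hprod : q (C t) ^ (d + 1) * q (C t) = q (C t) ^ (d + 1) := by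
    calc q (C t) ^ (d + 1) * q (C t)
        = q (C t) ^ (d + 1) * q (∏ i : Fin (d + 1), (1 - (X i) ^ (n i))) := by rw [hF]
      _ = ∏ i : Fin (d + 1), (q (C t) * q (1 - (X i) ^ (n i))) := by
          rw [Finset.prod_mul_distrib, map_prod]
          simp [Finset.prod_const, Finset.card_univ]
      _ = ∏ _i : Fin (d + 1), q (C t) := Finset.prod_congr rfl (fun i _ => htui i)
      _ = q (C t) ^ (d + 1) := by simp [Finset.prod_const, Finset.card_univ]
  apply Ideal.eq_top_of_isUnit_mem _ (x := (C (t ^ (d + 1) * (1 - t)) :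
    MvPolynomial (Fin (d + 1)) A))
  · rw [← Ideal.Quotient.eq_zero_iff_mem (I := J)]
    have hCeq : (C (t ^ (d + 1) * (1 - t)) : MvPolynomial (Fin (d + 1)) A)
        = C t ^ (d + 1) * (1 - C t) := by
      rw [map_mul, map_pow, map_sub, map_one]
    rw [hCeq, map_mul, map_pow, map_sub, map_one]
    linear_combination -hprod
  · exact ((htu.pow (d + 1)).mul h1t).map (C : A →+* MvPolynomial (Fin (d + 1)) A)

/-- The derivation `p ↦ ∑ i, g i * ∂p/∂xᵢ`. -/
noncomputable def hgDer (g : Fin (d + 1) → MvPolynomial (Fin (d + 1)) A) :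
    Derivation A (MvPolynomial (Fin (d + 1)) A) (MvPolynomial (Fin (d + 1)) A) where
  toLinearMap := ∑ i : Fin (d + 1), g i • (pderiv i).toLinearMap
  map_one_eq_zero' := by
    simp [LinearMap.sum_apply]
  leibniz' a b := by
    simp only [LinearMap.sum_apply, LinearMap.smul_apply, Derivation.coeFn_coe, pderiv_mul,
      smul_eq_mul]
    rw [Finset.mul_sum, Finset.mul_sum, ← Finset.sum_add_distrib]
    exact Finset.sum_congr rfl fun i _ => by ring

lemma hgDer_apply (g : Fin (d + 1) → MvPolynomial (Fin (d + 1)) A)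
    (p : MvPolynomial (Fin (d + 1)) A) :
    hgDer g p = ∑ i : Fin (d + 1), g i * pderiv i p := by
  show (∑ i : Fin (d + 1), g i • (pderiv i).toLinearMap) p = _
  simp [LinearMap.sum_apply]

end HyperAux

/-- Let `A` be an integral domain, `d ≥ 1`, `n₀,…,n_d ≥ 2` with
`n₀⋯n_d` invertible in `A`, and `t ∈ A` with `t(1−t) ∈ A^×`. Then the hypergeometric
scheme `U = Spec A[x₀,…,x_d]/((1−x₀^{n₀})⋯(1−x_d^{n_d}) − t)` is smooth over `A`. -/
theorem hypergeometric_scheme_smooth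
    (A : Type*) [CommRing A] [IsDomain A]
    (d : ℕ) (hd : 1 ≤ d) (n : Fin (d + 1) → ℕ) (hn : ∀ i, 2 ≤ n i)
    (hninv : IsUnit ((∏ i : Fin (d + 1), n i : ℕ) : A))
    (t : A) (ht : IsUnit (t * (1 - t))) :
    Algebra.Smooth A
      (MvPolynomial (Fin (d + 1)) A ⧸
        Ideal.span {(∏ i : Fin (d + 1), (1 - (MvPolynomial.X i) ^ (n i))) -
          MvPolynomial.C t}) := by
  classical
  show Algebra.Smooth A
    (MvPolynomial (Fin (d + 1)) A ⧸ Ideal.span {hgPoly n t})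
  set P := MvPolynomial (Fin (d + 1)) A with hPdef
  set I : Ideal P := Ideal.span {hgPoly n t} with hIdef
  set S := P ⧸ I with hSdef
  haveI : Algebra.FormallySmooth A P :=
    Algebra.FormallySmooth.of_equiv
      (MvPolynomial.renameEquiv A (Equiv.ulift.{0} (α := Fin (d + 1))))
  haveI : Algebra.FinitePresentation A P :=
    inferInstanceAs (Algebra.FinitePresentation A (MvPolynomial (Fin (d + 1)) A))
  -- units
  have hnu : ∀ i, IsUnit ((n i : A)) := by
    intro i
    have hprodu : IsUnit (∏ j : Fin (d + 1), ((n j : ℕ) : A)) := by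
      rwa [Nat.cast_prod] at hninv
    exact isUnit_of_dvd_unit
      (Finset.dvd_prod_of_mem (fun j => ((n j : ℕ) : A)) (Finset.mem_univ i)) hprodu
  have htu : IsUnit t := isUnit_of_mul_isUnit_left ht
  have h1tu : IsUnit (1 - t) := isUnit_of_mul_isUnit_right ht
  -- coefficients
  have h1mem : (1 : P) ∈
      Ideal.span (Set.range (fun o : Option (Fin (d + 1)) =>
        o.elim (hgPoly n t) (hgDp n))) := by
    rw [hg_span_top n hn t htu h1tu]; trivial
  obtain ⟨c, hc⟩ := Ideal.mem_span_range_iff_exists_fun.mp h1mem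
  rw [Fintype.sum_option] at hc
  simp only [Option.elim] at hc
  -- hc : c none * hgPoly n t + ∑ i, c (some i) * hgDp n i = 1
  set g : Fin (d + 1) → P :=
    fun i => -(C (((hnu i).unit⁻¹ : Aˣ) : A)) * c (some i) with hgdef
  have hkey : ∑ i : Fin (d + 1), g i * pderiv i (hgPoly n t)
      + c none * hgPoly n t = 1 := by
    have hsum : ∑ i : Fin (d + 1), g i * pderiv i (hgPoly n t)
        = ∑ i : Fin (d + 1), c (some i) * hgDp n i := by
      refine Finset.sum_congr rfl (fun i _ => ?_)
      rw [hg_pderiv n hn t i, hgdef]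
      have h1 : (((hnu i).unit⁻¹ : Aˣ) : A) * (n i : A) = 1 := by
        exact (hnu i).val_inv_mul
      calc -(C (((hnu i).unit⁻¹ : Aˣ) : A)) * c (some i) * (-(C (n i : A)) * hgDp n i)
          = C ((((hnu i).unit⁻¹ : Aˣ) : A) * (n i : A)) * (c (some i) * hgDp n i) := by
            rw [map_mul]; ring
        _ = c (some i) * hgDp n i := by rw [h1, map_one, one_mul]
    rw [hsum]
    linear_combination hc
  have halg : algebraMap P S = Ideal.Quotient.mk I := rfl
  have hsurj : Function.Surjective (algebraMap P S) := by
    rw [halg]; exact Ideal.Quotient.mk_surjective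
  have hKI : RingHom.ker (algebraMap P S) = I := by
    rw [halg]; exact Ideal.mk_ker
  constructor
  · -- FormallySmooth
    rw [Algebra.FormallySmooth.iff_split_injection (R := A) hsurj]
    have hfK : hgPoly n t ∈ RingHom.ker (algebraMap P S) := by
      rw [hKI]; exact Ideal.subset_span rfl
    set ξ : (RingHom.ker (algebraMap P S)).Cotangent :=
      (RingHom.ker (algebraMap P S)).toCotangent ⟨hgPoly n t, hfK⟩ with hξ
    set Dg : Derivation A P S := (Algebra.linearMap P S).compDer (hgDer g) with hDgdef
    have hDgapp : ∀ p : P, Dg p = algebraMap P S (∑ i : Fin (d + 1), g i * pderiv i p) := by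
      intro p
      rw [hDgdef]
      show (Algebra.linearMap P S) (hgDer g p) = _
      rw [hgDer_apply]
      rfl
    have hSf : algebraMap P S (hgPoly n t) = 0 := RingHom.mem_ker.mp hfK
    have hDgF : Dg (hgPoly n t) = 1 := by
      rw [hDgapp]
      have heq : (∑ i : Fin (d + 1), g i * pderiv i (hgPoly n t))
          = 1 - c none * hgPoly n t := by linear_combination hkey
      rw [heq, map_sub, map_one, map_mul, hSf, mul_zero, sub_zero]
    set ev : Ω[P⁄A] →ₗ[P] S := Dg.liftKaehlerDifferential with hevdef
    set φ : (S ⊗[P] Ω[P⁄A]) →ₗ[P] S :=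
      (LinearMap.mul' P S).comp (LinearMap.lTensor S ev) with hφdef
    have hann : (I : Submodule P P) ≤
        LinearMap.ker (LinearMap.toSpanSingleton P (RingHom.ker (algebraMap P S)).Cotangent ξ) := by
      intro p hp
      simp only [LinearMap.mem_ker, LinearMap.toSpanSingleton_apply]
      have hpK : p ∈ RingHom.ker (algebraMap P S) := by rw [hKI]; exact hp
      exact Ideal.Cotangent.smul_eq_zero_of_mem hpK ξ
    set μ : S →ₗ[P] (RingHom.ker (algebraMap P S)).Cotangent :=
      Submodule.liftQ _
        (LinearMap.toSpanSingleton P (RingHom.ker (algebraMap P S)).Cotangent ξ) hann with hμdef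
    have hμ : ∀ p : P, μ (algebraMap P S p) = p • ξ := fun p => rfl
    refine ⟨μ.comp φ, ?_⟩
    apply LinearMap.ext
    intro x
    obtain ⟨⟨p, hp⟩, rfl⟩ := (RingHom.ker (algebraMap P S)).toCotangent_surjective x
    have hpI : p ∈ I := by rw [← hKI]; exact hp
    obtain ⟨r, hr⟩ := Ideal.mem_span_singleton'.mp hpI
    have hsmul : ∀ (a : P) (s : S), a • s = algebraMap P S a * s := fun a s =>
      Algebra.smul_def a s
    have hDgp : Dg p = algebraMap P S r := by
      rw [← hr, Derivation.leibniz, hDgF, hsmul, hsmul, hSf, zero_mul, add_zero, mul_one]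
    simp only [LinearMap.comp_apply, LinearMap.id_apply,
      KaehlerDifferential.kerCotangentToTensor_toCotangent, hφdef,
      LinearMap.lTensor_tmul, hevdef, Derivation.liftKaehlerDifferential_comp_D,
      LinearMap.mul'_apply, one_mul]
    rw [hDgp, hμ r]
    calc r • ξ
        = (RingHom.ker (algebraMap P S)).toCotangent
            (r • (⟨hgPoly n t, hfK⟩ : RingHom.ker (algebraMap P S))) := (map_smul _ _ _).symm
      _ = (RingHom.ker (algebraMap P S)).toCotangent ⟨p, hp⟩ := by
          exact congrArg _ (Subtype.ext (by rw [SetLike.val_smul, smul_eq_mul, hr]))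
  · -- FinitePresentation
    exact Algebra.FinitePresentation.quotient
      (Submodule.fg_span (Set.finite_singleton (hgPoly n t)))
end
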